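/- Let h : ℝ^d → ℝ be differentiable with L-Lipschitz gradient, let F : ℝ^d × ℝ^r → ℝ^d satisfy F(θ, ω*(θ)) = ∇h(θ) and be L-Lipschitz in ω (for each fixed θ), where ω* : ℝ^d → ℝ^r. Fix θ, ω, and vectors f ∈ ℝ^d, and a step size α > 0 with α ≤ 1/(6L). Set θ⁺ = θ − α·f and let Δf = f − F(θ, ω), y = ‖ω − ω*(θ)‖². If additionally ‖f‖ ≤ ‖Δf‖ + L·√y + ‖∇h(θ)‖, then h(θ⁺) ≤ h(θ) − (α/4)·‖∇h(θ)‖² + (5α/4)·‖Δf‖² + (5L²α/4)·y. -/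

import Mathlib

open intervalIntegral

lemma my_descent {E : Type*} [NormedAddCommGroup E] [InnerProductSpace ℝ E] [CompleteSpace E]
    (h : E → ℝ) (L : ℝ) (hL : 0 ≤ L) (hdiff : Differentiable ℝ h)
    (hLip : ∀ x y, ‖gradient h x - gradient h y‖ ≤ L * ‖x - y‖)
    (x v : E) :
    h (x + v) ≤ h x + (inner ℝ (gradient h x) v : ℝ) + L / 2 * ‖v‖ ^ 2 := by
  have hderiv : ∀ t : ℝ, HasDerivAt (fun t : ℝ => h (x + t • v))
      ((inner ℝ (gradient h (x + t • v)) v : ℝ)) t := by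
    intro t
    have h1 : HasDerivAt (fun t : ℝ => x + t • v) v t :=
      by simpa using ((hasDerivAt_id t).smul_const v).const_add x
    have h2 := (hdiff (x + t • v)).hasGradientAt.hasFDerivAt
    have h3 := h2.comp_hasDerivAt t h1
    simp [InnerProductSpace.toDual_apply_apply] at h3 ⊢
    exact h3
  have hgl : LipschitzWith (Real.toNNReal L) (gradient h) := by
    apply LipschitzWith.of_dist_le_mul
    intro a b
    rw [dist_eq_norm, dist_eq_norm, Real.coe_toNNReal _ hL]
    exact hLip a b
  have hcont : Continuous fun t : ℝ => (inner ℝ (gradient h (x + t • v)) v : ℝ) := by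
    apply Continuous.inner
    · exact hgl.continuous.comp (by continuity)
    · exact continuous_const
  have hint : ∫ t in (0:ℝ)..1, (inner ℝ (gradient h (x + t • v)) v : ℝ)
      = h (x + v) - h x := by
    have := intervalIntegral.integral_eq_sub_of_hasDerivAt
      (f := fun t : ℝ => h (x + t • v)) (fun t _ => hderiv t)
      (hcont.intervalIntegrable 0 1)
    simpa using this
  have hbound : ∫ t in (0:ℝ)..1, (inner ℝ (gradient h (x + t • v)) v : ℝ)
      ≤ ∫ t in (0:ℝ)..1, ((inner ℝ (gradient h x) v : ℝ) + L * ‖v‖ ^ 2 * t) := by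
    apply intervalIntegral.integral_mono_on zero_le_one (hcont.intervalIntegrable 0 1)
      ((continuous_const.add (continuous_const.mul continuous_id)).intervalIntegrable 0 1)
    intro t ht
    have heq : (inner ℝ (gradient h (x + t • v)) v : ℝ) - inner ℝ (gradient h x) v
        = inner ℝ (gradient h (x + t • v) - gradient h x) v := (inner_sub_left _ _ _).symm
    have h2 : (inner ℝ (gradient h (x + t • v) - gradient h x) v : ℝ)
        ≤ ‖gradient h (x + t • v) - gradient h x‖ * ‖v‖ := real_inner_le_norm _ _
    have h3 : ‖gradient h (x + t • v) - gradient h x‖ ≤ L * (|t| * ‖v‖) := by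
      have := hLip (x + t • v) x
      simpa [norm_smul] using this
    rw [abs_of_nonneg ht.1] at h3
    simp only [Pi.add_apply, Pi.mul_apply, id_eq]
    nlinarith [heq, h2, h3, norm_nonneg v,
      norm_nonneg (gradient h (x + t • v) - gradient h x)]
  have hval : (∫ t in (0:ℝ)..1, ((inner ℝ (gradient h x) v : ℝ) + L * ‖v‖ ^ 2 * t))
      = (inner ℝ (gradient h x) v : ℝ) + L / 2 * ‖v‖ ^ 2 := by
    rw [intervalIntegral.integral_add intervalIntegrable_const
      ((intervalIntegral.intervalIntegrable_id).const_mul _)]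
    rw [intervalIntegral.integral_const_mul, integral_id,
      intervalIntegral.integral_const]
    norm_num
    ring
  linarith [hint ▸ (hbound.trans_eq hval)]

set_option maxHeartbeats 1000000 in
theorem stmt_7 (d r : ℕ) (h : EuclideanSpace ℝ (Fin d) → ℝ) (L : ℝ)
    (F : EuclideanSpace ℝ (Fin d) → EuclideanSpace ℝ (Fin r) → EuclideanSpace ℝ (Fin d))
    (ωstar : EuclideanSpace ℝ (Fin d) → EuclideanSpace ℝ (Fin r))
    (hdiff : Differentiable ℝ h)
    (hLipgrad : ∀ θ₁ θ₂, ‖gradient h θ₁ - gradient h θ₂‖ ≤ L * ‖θ₁ - θ₂‖)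
    (hF : ∀ θ, F θ (ωstar θ) = gradient h θ)
    (hLipF : ∀ θ ω₁ ω₂, ‖F θ ω₁ - F θ ω₂‖ ≤ L * ‖ω₁ - ω₂‖)
    (θ : EuclideanSpace ℝ (Fin d)) (ω : EuclideanSpace ℝ (Fin r))
    (f : EuclideanSpace ℝ (Fin d)) (α : ℝ) (hα : 0 < α) (hαL : α ≤ 1 / (6 * L))
    (hfbound : ‖f‖ ≤ ‖f - F θ ω‖ + L * Real.sqrt (‖ω - ωstar θ‖ ^ 2) + ‖gradient h θ‖) :
    h (θ - α • f) ≤ h θ - (α / 4) * ‖gradient h θ‖ ^ 2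
      + (5 * α / 4) * ‖f - F θ ω‖ ^ 2 + (5 * L ^ 2 * α / 4) * ‖ω - ωstar θ‖ ^ 2 := by
  have hL : 0 < L := by
    have h6 : 0 < 6 * L := one_div_pos.mp (hα.trans_le hαL)
    linarith
  have hαL' : α * L ≤ 1 / 6 := by
    have := (le_div_iff₀ (by linarith : (0:ℝ) < 6 * L)).mp hαL
    nlinarith
  set g := gradient h θ with hg
  set G := ‖g‖ with hG
  set D := ‖f - F θ ω‖ with hD
  set B := ‖ω - ωstar θ‖ with hB
  have hsqrt : Real.sqrt (B ^ 2) = B := Real.sqrt_sq (norm_nonneg _)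
  rw [hsqrt] at hfbound
  -- bias bound
  have hb : ‖g - F θ ω‖ ≤ L * B := by
    calc ‖g - F θ ω‖ = ‖F θ (ωstar θ) - F θ ω‖ := by rw [hF]
      _ ≤ L * ‖ωstar θ - ω‖ := hLipF θ _ _
      _ = L * B := by rw [norm_sub_rev]
  -- descent lemma
  have hdesc := my_descent h L hL.le hdiff hLipgrad θ (-(α • f))
  rw [← sub_eq_add_neg] at hdesc
  have hv1 : (inner ℝ g (-(α • f)) : ℝ) = -(α * inner ℝ g f) := by
    rw [inner_neg_right, real_inner_smul_right]
  have hv2 : ‖-(α • f)‖ ^ 2 = α ^ 2 * ‖f‖ ^ 2 := by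
    rw [norm_neg, norm_smul, Real.norm_eq_abs, abs_of_nonneg hα.le, mul_pow]
  rw [hv1, hv2] at hdesc
  -- inner product lower bound
  have hinner : (inner ℝ g f : ℝ) ≥ G ^ 2 - G * (L * B + D) := by
    have e1 : (inner ℝ g f : ℝ) = inner ℝ g g - inner ℝ g (g - f) := by
      rw [inner_sub_right]; ring
    have e2 : (inner ℝ g (g - f) : ℝ) ≤ G * ‖g - f‖ := real_inner_le_norm _ _
    have e3 : ‖g - f‖ ≤ L * B + D := by
      have hid : g - f = (g - F θ ω) + -(f - F θ ω) := by abel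
      calc ‖g - f‖ = ‖(g - F θ ω) + -(f - F θ ω)‖ := by rw [hid]
        _ ≤ ‖g - F θ ω‖ + ‖-(f - F θ ω)‖ := norm_add_le _ _
        _ = ‖g - F θ ω‖ + D := by rw [norm_neg]
        _ ≤ L * B + D := by linarith
    have e4 : (inner ℝ g g : ℝ) = G ^ 2 := real_inner_self_eq_norm_sq g
    nlinarith [norm_nonneg g, norm_nonneg (g - f)]
  have hf2 : ‖f‖ ^ 2 ≤ (D + L * B + G) ^ 2 := by
    have := norm_nonneg f
    nlinarith
  have hGn : 0 ≤ G := norm_nonneg _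
  have hDn : 0 ≤ D := norm_nonneg _
  have hBn : 0 ≤ B := norm_nonneg _
  have t1 : α * ‖f‖ ^ 2 ≤ α * (D + L * B + G) ^ 2 :=
    mul_le_mul_of_nonneg_left hf2 hα.le
  have k1 : L / 2 * (α ^ 2 * ‖f‖ ^ 2) ≤ 1 / 12 * (α * (D + L * B + G) ^ 2) := by
    have hm := mul_le_mul hαL' t1 (mul_nonneg hα.le (sq_nonneg ‖f‖)) (by norm_num)
    have he : L / 2 * (α ^ 2 * ‖f‖ ^ 2) = (α * L) * (α * ‖f‖ ^ 2) / 2 := by ring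
    linarith
  have k2 : α * (G ^ 2 - G * (L * B + D)) ≤ α * inner ℝ g f :=
    mul_le_mul_of_nonneg_left hinner hα.le
  nlinarith [hdesc, k1, k2,
    mul_nonneg hα.le (sq_nonneg (4 * G - 7 * D)),
    mul_nonneg hα.le (sq_nonneg (4 * G - 7 * L * B)),
    mul_nonneg hα.le (sq_nonneg (D - L * B)),
    mul_nonneg (mul_nonneg (mul_nonneg hα.le hDn) hL.le) hBn]
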